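/- arXiv:1209.1420 — 8 statements merged into one kernel-verified Lean document; each statement's English description precedes it below -/
import Mathlib

section
/- For every field k and all Zorn vector matrices x and y over k, the norm of their Zorn product equals the product of their norms: N(x * y) = N(x) · N(y). -/
open Matrix

/-- A Zorn vector matrix (split octonion) over `k`: a quadruple `(a, v, w, d)`
with `a, d ∈ k` and `v, w ∈ (Fin 3 → k)`. -/
abbrev Zorn (k : Type*) := k × (Fin 3 → k) × (Fin 3 → k) × k

variable {k : Type*} [Field k]

/-- The Zorn product of two Zorn vector matrices. -/
def zmul (x y : Zorn k) : Zorn k :=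
  (x.1 * y.1 + x.2.1 ⬝ᵥ y.2.2.1,
   x.1 • y.2.1 + y.2.2.2 • x.2.1 - x.2.2.1 ⨯₃ y.2.2.1,
   y.1 • x.2.2.1 + x.2.2.2 • y.2.2.1 + x.2.1 ⨯₃ y.2.1,
   x.2.2.2 * y.2.2.2 + x.2.2.1 ⬝ᵥ y.2.1)

/-- The norm of a Zorn vector matrix. -/
def zN (x : Zorn k) : k := x.1 * x.2.2.2 - x.2.1 ⬝ᵥ x.2.2.1

/-- The norm of the Zorn product equals the product of the norms. -/
theorem zN_zmul (x y : Zorn k) : zN (zmul x y) = zN x * zN y := by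
  obtain ⟨a, v, w, d⟩ := x
  obtain ⟨a', v', w', d'⟩ := y
  simp only [zN, zmul, dotProduct, crossProduct, Fin.sum_univ_three,
    Matrix.cons_dotProduct, Pi.add_apply, Pi.sub_apply, Pi.smul_apply,
    smul_eq_mul, LinearMap.mk₂_apply, Matrix.cons_val_zero, Matrix.cons_val_one,
    Matrix.head_cons, Matrix.cons_val_two, Matrix.tail_cons]
  ring
end

section
/- Let k be a field and g ∈ SL₃(k). The map θ(g) sending the Zorn vector matrix (a, v, w, d) to (a, g *ᵥ v, (g⁻¹)ᵀ *ᵥ w, d) is a k-linear bijection of the Zorn vector matrices over k which fixes the identity and is multiplicative: θ(g)(x * y) = θ(g)(x) * θ(g)(y) for all x, y. -/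
open Matrix

variable {k : Type*} [Field k]

/-- The identity Zorn vector matrix. -/
def zone : Zorn k := (1, 0, 0, 1)

/-- The map `θ(g)` associated to `g ∈ SL₃(k)`. -/
noncomputable def theta (g : Matrix.SpecialLinearGroup (Fin 3) k) (x : Zorn k) : Zorn k :=
  (x.1, (g : Matrix (Fin 3) (Fin 3) k) *ᵥ x.2.1,
   ((g : Matrix (Fin 3) (Fin 3) k)⁻¹)ᵀ *ᵥ x.2.2.1, x.2.2.2)

lemma transpose_mulVec_cross (A : Matrix (Fin 3) (Fin 3) k) (hA : A.det = 1)
    (v w : Fin 3 → k) : Aᵀ *ᵥ ((A *ᵥ v) ⨯₃ (A *ᵥ w)) = v ⨯₃ w := by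
  have h := hA
  rw [Matrix.det_fin_three] at h
  funext i
  fin_cases i
  · show _ = v 1 * w 2 - v 2 * w 1
    simp [crossProduct, mulVec, dotProduct, Fin.sum_univ_three, Matrix.transpose_apply]
    linear_combination (v 1 * w 2 - v 2 * w 1) * h
  · show _ = v 2 * w 0 - v 0 * w 2
    simp [crossProduct, mulVec, dotProduct, Fin.sum_univ_three, Matrix.transpose_apply]
    linear_combination (v 2 * w 0 - v 0 * w 2) * h
  · show _ = v 0 * w 1 - v 1 * w 0
    simp [crossProduct, mulVec, dotProduct, Fin.sum_univ_three, Matrix.transpose_apply]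
    linear_combination (v 0 * w 1 - v 1 * w 0) * h

/-- For `g ∈ SL₃(k)`, the map `θ(g)` is a `k`-linear bijection of the Zorn
vector matrices fixing the identity and multiplicative for the Zorn product. -/
theorem theta_is_automorphism (g : Matrix.SpecialLinearGroup (Fin 3) k) :
    Function.Bijective (theta g) ∧
    (∀ x y : Zorn k, theta g (x + y) = theta g x + theta g y) ∧
    (∀ (c : k) (x : Zorn k), theta g (c • x) = c • theta g x) ∧
    theta g zone = zone ∧
    (∀ x y : Zorn k, theta g (zmul x y) = zmul (theta g x) (theta g y)) := by
  set A : Matrix (Fin 3) (Fin 3) k := (g : Matrix (Fin 3) (Fin 3) k) with hAdef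
  have hA : A.det = 1 := g.2
  have hu : IsUnit A.det := by rw [hA]; exact isUnit_one
  have hli : A⁻¹ * A = 1 := Matrix.nonsing_inv_mul A hu
  have hri : A * A⁻¹ = 1 := Matrix.mul_nonsing_inv A hu
  have hAinvdet : (A⁻¹ᵀ).det = 1 := by
    rw [Matrix.det_transpose, Matrix.det_nonsing_inv, hA]; simp
  have hAinvinv : (A⁻¹ᵀ)⁻¹ = Aᵀ := by
    have hut : IsUnit Aᵀ.det := by rw [Matrix.det_transpose]; exact hu
    rw [Matrix.transpose_nonsing_inv]
    exact Matrix.nonsing_inv_nonsing_inv _ hut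
  -- cancellation lemmas
  have hcan1 : ∀ v : Fin 3 → k, A⁻¹ *ᵥ (A *ᵥ v) = v := by
    intro v; rw [Matrix.mulVec_mulVec, hli, Matrix.one_mulVec]
  have hcan2 : ∀ w : Fin 3 → k, Aᵀ *ᵥ (A⁻¹ᵀ *ᵥ w) = w := by
    intro w
    rw [Matrix.mulVec_mulVec, ← Matrix.transpose_mul, hli, Matrix.transpose_one,
      Matrix.one_mulVec]
  have hcan3 : ∀ v : Fin 3 → k, A *ᵥ (A⁻¹ *ᵥ v) = v := by
    intro v; rw [Matrix.mulVec_mulVec, hri, Matrix.one_mulVec]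
  have hcan4 : ∀ w : Fin 3 → k, A⁻¹ᵀ *ᵥ (Aᵀ *ᵥ w) = w := by
    intro w
    rw [Matrix.mulVec_mulVec, ← Matrix.transpose_mul, hri, Matrix.transpose_one,
      Matrix.one_mulVec]
  -- dot product invariance
  have hdot2 : ∀ w v : Fin 3 → k, (A⁻¹ᵀ *ᵥ w) ⬝ᵥ (A *ᵥ v) = w ⬝ᵥ v := by
    intro w v
    rw [Matrix.mulVec_transpose, Matrix.dotProduct_mulVec, Matrix.vecMul_vecMul, hli,
      Matrix.vecMul_one]
  have hdot1 : ∀ v w : Fin 3 → k, (A *ᵥ v) ⬝ᵥ (A⁻¹ᵀ *ᵥ w) = v ⬝ᵥ w := by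
    intro v w
    rw [dotProduct_comm, hdot2, dotProduct_comm]
  -- cross product covariance
  have hcrossv : ∀ v v' : Fin 3 → k, (A *ᵥ v) ⨯₃ (A *ᵥ v') = A⁻¹ᵀ *ᵥ (v ⨯₃ v') := by
    intro v v'
    have := transpose_mulVec_cross A hA v v'
    calc (A *ᵥ v) ⨯₃ (A *ᵥ v') = A⁻¹ᵀ *ᵥ (Aᵀ *ᵥ ((A *ᵥ v) ⨯₃ (A *ᵥ v'))) := (hcan4 _).symm
      _ = A⁻¹ᵀ *ᵥ (v ⨯₃ v') := by rw [this]
  have hcrossw : ∀ w w' : Fin 3 → k, (A⁻¹ᵀ *ᵥ w) ⨯₃ (A⁻¹ᵀ *ᵥ w') = A *ᵥ (w ⨯₃ w') := by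
    intro w w'
    have h2 := transpose_mulVec_cross (A⁻¹ᵀ) hAinvdet w w'
    rw [Matrix.transpose_transpose] at h2
    calc (A⁻¹ᵀ *ᵥ w) ⨯₃ (A⁻¹ᵀ *ᵥ w')
        = A *ᵥ (A⁻¹ *ᵥ ((A⁻¹ᵀ *ᵥ w) ⨯₃ (A⁻¹ᵀ *ᵥ w'))) := (hcan3 _).symm
      _ = A *ᵥ (w ⨯₃ w') := by rw [h2]
  refine ⟨?_, ?_, ?_, ?_, ?_⟩
  · -- bijective
    refine Function.bijective_iff_has_inverse.2
      ⟨fun x => (x.1, A⁻¹ *ᵥ x.2.1, Aᵀ *ᵥ x.2.2.1, x.2.2.2), fun x => ?_, fun x => ?_⟩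
    · simp [theta, hcan1, hcan2, ← hAdef]
    · simp [theta, hcan3, hcan4, ← hAdef]
  · intro x y
    simp [theta, Matrix.mulVec_add, Prod.ext_iff, ← hAdef]
  · intro c x
    simp [theta, Matrix.mulVec_smul, Prod.ext_iff, ← hAdef]
  · simp [theta, zone, ← hAdef]
  · intro x y
    simp only [theta, zmul, ← hAdef, Prod.mk.injEq]
    refine ⟨by rw [hdot1], ?_, ?_, by rw [hdot2]⟩
    · rw [Matrix.mulVec_sub, Matrix.mulVec_add, Matrix.mulVec_smul, Matrix.mulVec_smul,
        hcrossw]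
    · rw [Matrix.mulVec_add, Matrix.mulVec_add, Matrix.mulVec_smul, Matrix.mulVec_smul,
        hcrossv]
end

section
/- Let k be a field of characteristic different from 2. If f is a k-linear bijection of the Zorn vector matrices over k satisfying f(x * y) = f(x) * f(y) for all x, y, and f fixes every diagonal element, i.e. f(a, 0, 0, d) = (a, 0, 0, d) for all a, d ∈ k, then there exists a unique g ∈ SL₃(k) such that f = θ(g), where θ(g)(a, v, w, d) = (a, g *ᵥ v, (g⁻¹)ᵀ *ᵥ w, d). -/
open Matrix

variable {k : Type*} [Field k]

/-- inclusion of the `V` Peirce space -/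
def incV : (Fin 3 → k) →ₗ[k] Zorn k where
  toFun v := (0, v, 0, 0)
  map_add' v v' := by simp [Prod.ext_iff]
  map_smul' c v := by simp [Prod.ext_iff]

/-- inclusion of the `W` Peirce space -/
def incW : (Fin 3 → k) →ₗ[k] Zorn k where
  toFun w := (0, 0, w, 0)
  map_add' v v' := by simp [Prod.ext_iff]
  map_smul' c v := by simp [Prod.ext_iff]

/-- projection onto the `V` component -/
def projV : Zorn k →ₗ[k] (Fin 3 → k) :=
  (LinearMap.fst k (Fin 3 → k) ((Fin 3 → k) × k)).comp (LinearMap.snd k k _)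

/-- projection onto the `W` component -/
def projW : Zorn k →ₗ[k] (Fin 3 → k) :=
  ((LinearMap.fst k (Fin 3 → k) k).comp (LinearMap.snd k (Fin 3 → k) _)).comp
    (LinearMap.snd k k _)

/-- Over a field of characteristic not 2, every `k`-linear bijective
multiplicative map of the Zorn vector matrices fixing all diagonal elements
is `θ(g)` for a unique `g ∈ SL₃(k)`. -/
theorem exists_unique_theta (h2 : (2 : k) ≠ 0) (f : Zorn k →ₗ[k] Zorn k)
    (hbij : Function.Bijective f)
    (hmul : ∀ x y : Zorn k, f (zmul x y) = zmul (f x) (f y))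
    (hdiag : ∀ a d : k, f (a, 0, 0, d) = (a, 0, 0, d)) :
    ∃! g : Matrix.SpecialLinearGroup (Fin 3) k, ∀ x : Zorn k, f x = theta g x := by
  have he1 : f (1, 0, 0, 0) = (1, 0, 0, 0) := hdiag 1 0
  have he2 : f (0, 0, 0, 1) = (0, 0, 0, 1) := hdiag 0 1
  set Al : (Fin 3 → k) →ₗ[k] (Fin 3 → k) := projV ∘ₗ (f ∘ₗ incV) with hAl
  set Bl : (Fin 3 → k) →ₗ[k] (Fin 3 → k) := projW ∘ₗ (f ∘ₗ incW) with hBl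
  have hV : ∀ v : Fin 3 → k, f (0, v, 0, 0) = (0, Al v, 0, 0) := by
    intro v
    have key : (0, v, 0, 0) = zmul (1, 0, 0, 0) (zmul ((0, v, 0, 0) : Zorn k) (0, 0, 0, 1)) := by
      simp [zmul, Prod.ext_iff]
    conv_lhs => rw [key]
    rw [hmul, hmul, he1, he2]
    simp [zmul, Prod.ext_iff, hAl, projV, incV]
  have hW : ∀ w : Fin 3 → k, f (0, 0, w, 0) = (0, 0, Bl w, 0) := by
    intro w
    have key : (0, 0, w, 0) = zmul (0, 0, 0, 1) (zmul ((0, 0, w, 0) : Zorn k) (1, 0, 0, 0)) := by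
      simp [zmul, Prod.ext_iff]
    conv_lhs => rw [key]
    rw [hmul, hmul, he1, he2]
    simp [zmul, Prod.ext_iff, hBl, projW, incW]
  -- full description of f
  have hf : ∀ x : Zorn k, f x = (x.1, Al x.2.1, Bl x.2.2.1, x.2.2.2) := by
    intro ⟨a, v, w, d⟩
    have hx : ((a, v, w, d) : Zorn k) = (a, 0, 0, d) + (0, v, 0, 0) + (0, 0, w, 0) := by
      simp [Prod.ext_iff]
    rw [hx, map_add, map_add, hdiag, hV, hW]
    simp [Prod.ext_iff]
  -- dot product relation
  have hdot : ∀ v w : Fin 3 → k, Al v ⬝ᵥ Bl w = v ⬝ᵥ w := by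
    intro v w
    have := hmul (0, v, 0, 0) (0, 0, w, 0)
    rw [hV, hW] at this
    have h1 : zmul ((0, v, 0, 0) : Zorn k) (0, 0, w, 0) = (v ⬝ᵥ w, 0, 0, 0) := by
      simp [zmul, Prod.ext_iff]
    rw [h1, hdiag] at this
    have h2 : zmul ((0, Al v, 0, 0) : Zorn k) (0, 0, Bl w, 0) = (Al v ⬝ᵥ Bl w, 0, 0, 0) := by
      simp [zmul, Prod.ext_iff]
    rw [h2] at this
    exact (congrArg Prod.fst this).symm
  -- cross product relation
  have hcross : ∀ v v' : Fin 3 → k, Bl (v ⨯₃ v') = Al v ⨯₃ Al v' := by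
    intro v v'
    have := hmul (0, v, 0, 0) (0, v', 0, 0)
    rw [hV, hV] at this
    have h1 : zmul ((0, v, 0, 0) : Zorn k) (0, v', 0, 0) = (0, 0, v ⨯₃ v', 0) := by
      simp [zmul, Prod.ext_iff]
    rw [h1, hW] at this
    have h2 : zmul ((0, Al v, 0, 0) : Zorn k) (0, Al v', 0, 0) = (0, 0, Al v ⨯₃ Al v', 0) := by
      simp [zmul, Prod.ext_iff]
    rw [h2] at this
    exact congrArg (fun z : Zorn k => z.2.2.1) this
  -- matrices
  set A : Matrix (Fin 3) (Fin 3) k := LinearMap.toMatrix' Al with hA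
  set B : Matrix (Fin 3) (Fin 3) k := LinearMap.toMatrix' Bl with hB
  have hAv : ∀ v, Al v = A *ᵥ v := by
    intro v
    rw [hA, ← Matrix.toLin'_apply, Matrix.toLin'_toMatrix']
  have hBv : ∀ w, Bl w = B *ᵥ w := by
    intro w
    rw [hB, ← Matrix.toLin'_apply, Matrix.toLin'_toMatrix']
  -- determinant
  have hdet : A.det = 1 := by
    have h1 : (Matrix.of ![Al (Pi.single 0 1), Al (Pi.single 1 1), Al (Pi.single 2 1)]) = Aᵀ := by
      ext i j
      fin_cases i <;> simp [hAv, Matrix.mulVec_single]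
    have h2 : Al (Pi.single 0 1) ⬝ᵥ (Al (Pi.single 1 1) ⨯₃ Al (Pi.single 2 1)) =
        Matrix.det (Matrix.of ![Al (Pi.single 0 1), Al (Pi.single 1 1), Al (Pi.single 2 1)]) :=
      triple_product_eq_det _ _ _
    rw [h1, Matrix.det_transpose] at h2
    rw [← h2, ← hcross, hdot]
    have h3 : (Pi.single 0 1 : Fin 3 → k) ⬝ᵥ ((Pi.single 1 1 : Fin 3 → k) ⨯₃ Pi.single 2 1) =
        Matrix.det (Matrix.of ![(Pi.single 0 1 : Fin 3 → k), Pi.single 1 1, Pi.single 2 1]) :=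
      triple_product_eq_det _ _ _
    rw [h3]
    have h4 : (Matrix.of ![(Pi.single 0 1 : Fin 3 → k), Pi.single 1 1, Pi.single 2 1]) =
        (1 : Matrix (Fin 3) (Fin 3) k) := by
      ext i j
      fin_cases i <;> fin_cases j <;>
        simp [Matrix.one_apply, Pi.single_apply, vecHead, vecTail]
    rw [h4, Matrix.det_one]
  -- B in terms of A
  have hAB : Aᵀ * B = 1 := by
    ext i j
    have h := hdot (Pi.single i 1) (Pi.single j 1)
    rw [hAv, hBv, Matrix.mulVec_single, Matrix.mulVec_single] at h
    simp only [dotProduct, mul_one, Pi.smul_apply, op_smul_eq_mul, Matrix.col_apply, one_mul] at h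
    rw [Matrix.mul_apply, Matrix.one_apply]
    simp only [Matrix.transpose_apply]
    rw [h]
    simp [Pi.single_apply, Finset.sum_ite_eq, eq_comm]
  have hBinv : B = (A⁻¹)ᵀ := by
    rw [Matrix.transpose_nonsing_inv]
    exact (Matrix.inv_eq_right_inv hAB).symm
  refine ⟨⟨A, hdet⟩, ?_, ?_⟩
  · intro x
    rw [hf]; unfold theta
    simp only [Matrix.SpecialLinearGroup.coe_mk]
    rw [hAv, hBv, hBinv]
  · intro g hg
    ext i j
    have h1 := hf (0, Pi.single j 1, 0, 0)
    have h2 := hg (0, Pi.single j 1, 0, 0)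
    rw [h1] at h2
    have := congrArg (fun z : Zorn k => z.2.1 i) h2
    simp only [theta] at this
    rw [hAv] at this
    simpa [Matrix.mulVec_single] using this.symm
end

section
/- Let k be a field. Define η : Matrix (Fin 2) (Fin 2) k → (Zorn vector matrices over k) by η !![α, β; γ, δ] = (α, (β,0,0), (γ,0,0), δ), and let J be the Zorn vector matrix (0, (0,1,0), (0,1,0), 0). Then the Zorn product realizes the Cayley–Dickson doubling of Mat₂(k) with its adjugate involution: for all 2 × 2 matrices a, b, c, d over k, (η(a) + η(b) * J) * (η(c) + η(d) * J) = η(a·c + (adjugate d)·b) + η(d·a + b·(adjugate c)) * J. -/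
open Matrix

variable {k : Type*} [Field k]

/-- The embedding `η` of 2 × 2 matrices into the Zorn vector matrices. -/
def eta (m : Matrix (Fin 2) (Fin 2) k) : Zorn k :=
  (m 0 0, ![m 0 1, 0, 0], ![m 1 0, 0, 0], m 1 1)

/-- The splitting element `J`. -/
def Jz : Zorn k := (0, ![0, 1, 0], ![0, 1, 0], 0)

set_option maxHeartbeats 1600000 in
/-- The Zorn product realizes the Cayley–Dickson doubling of `Mat₂(k)` with
its adjugate involution. -/
theorem zorn_cayley_dickson (a b c d : Matrix (Fin 2) (Fin 2) k) :
    zmul (eta a + zmul (eta b) Jz) (eta c + zmul (eta d) Jz) =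
      eta (a * c + d.adjugate * b) + zmul (eta (d * a + b * c.adjugate)) Jz := by
  unfold zmul eta Jz
  refine Prod.ext ?_ (Prod.ext (funext fun i => ?_) (Prod.ext (funext fun i => ?_) ?_))
  · simp [Matrix.mul_apply, Matrix.adjugate_fin_two, Fin.sum_univ_succ, dotProduct,
      Matrix.vecMul, Matrix.vecHead, Matrix.vecTail, crossProduct]; ring
  · fin_cases i <;>
      simp [Matrix.mul_apply, Matrix.adjugate_fin_two, Fin.sum_univ_succ, dotProduct,
        Matrix.vecMul, Matrix.vecHead, Matrix.vecTail, crossProduct] <;> ring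
  · fin_cases i <;>
      simp [Matrix.mul_apply, Matrix.adjugate_fin_two, Fin.sum_univ_succ, dotProduct,
        Matrix.vecMul, Matrix.vecHead, Matrix.vecTail, crossProduct] <;> ring
  · simp [Matrix.mul_apply, Matrix.adjugate_fin_two, Fin.sum_univ_succ, dotProduct,
      Matrix.vecMul, Matrix.vecHead, Matrix.vecTail, crossProduct]; ring
end

section
/- Let k be a field and g a 2 × 2 matrix over k with det g = 1. Then the map γ(g) : η(a) + η(b) * J ↦ η(a) + η(g·b) * J is multiplicative for the Zorn product; concretely, for all 2 × 2 matrices a, b, c, d over k: (η(a) + η(g·b) * J) * (η(c) + η(g·d) * J) = η(a·c + (adjugate d)·b) + η(g·(d·a + b·(adjugate c))) * J. -/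
open Matrix

variable {k : Type*} [Field k]

set_option maxHeartbeats 1000000 in
/-- For `g` of determinant 1, the map `γ(g) : η(a) + η(b)·J ↦ η(a) + η(g·b)·J`
is multiplicative for the Zorn product. -/
theorem gamma_multiplicative (g : Matrix (Fin 2) (Fin 2) k) (hg : g.det = 1)
    (a b c d : Matrix (Fin 2) (Fin 2) k) :
    zmul (eta a + zmul (eta (g * b)) Jz) (eta c + zmul (eta (g * d)) Jz) =
      eta (a * c + d.adjugate * b) + zmul (eta (g * (d * a + b * c.adjugate))) Jz := by
  rw [det_fin_two] at hg
  simp only [zmul, eta, Jz, adjugate_fin_two, Matrix.mul_apply, Fin.sum_univ_two,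
    Matrix.add_apply, Matrix.of_apply, Matrix.cons_val', Matrix.cons_val_zero,
    Matrix.cons_val_one, Matrix.head_cons, Prod.mk_add_mk, Prod.mk.injEq]
  refine ⟨?_, ?_, ?_, ?_⟩
  all_goals try funext i
  all_goals try fin_cases i
  all_goals simp [dotProduct, Fin.sum_univ_three, cross_apply]
  all_goals try ring
  · linear_combination (b 0 0 * d 1 1 - b 1 0 * d 0 1) * hg
  · linear_combination (b 0 1 * d 1 1 - b 1 1 * d 0 1) * hg
  · linear_combination (b 1 0 * d 0 0 - b 0 0 * d 1 0) * hg
  · linear_combination (b 1 1 * d 0 0 - b 0 1 * d 1 0) * hg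
end

section
/- Let k be a field of characteristic different from 2. If f is a k-linear bijection of the Zorn vector matrices over k satisfying f(x * y) = f(x) * f(y) for all x, y, and f(η(a)) = η(a) for every 2 × 2 matrix a over k, then there exists a unique 2 × 2 matrix g over k with det g = 1 such that f(η(a) + η(b) * J) = η(a) + η(g·b) * J for all 2 × 2 matrices a, b over k. -/
open Matrix

variable {k : Type*} [Field k]

lemma Zorn.ext' {x y : Zorn k} (h1 : x.1 = y.1) (h2 : ∀ i, x.2.1 i = y.2.1 i)
    (h3 : ∀ i, x.2.2.1 i = y.2.2.1 i) (h4 : x.2.2.2 = y.2.2.2) : x = y := by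
  obtain ⟨a, v, w, d⟩ := x; obtain ⟨a', v', w', d'⟩ := y
  simp_all [funext_iff]

/-- `η(b) · (η(g)·J) = η(g·b)·J`. -/
lemma eta_zmul_eta_J (g b : Matrix (Fin 2) (Fin 2) k) :
    zmul (eta b) (zmul (eta g) Jz) = zmul (eta (g * b)) Jz := by
  apply Zorn.ext' <;>
    simp [zmul, eta, Jz, dotProduct, Fin.sum_univ_three, cross_apply, Matrix.mul_apply,
      Fin.sum_univ_two, Fin.forall_fin_succ] <;> ring_nf <;> simp [mul_comm]

lemma JetaJ₁ : zmul (Jz : Zorn k) (zmul (eta !![1,0;0,0]) Jz) = eta !![0,0;0,1] := by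
  apply Zorn.ext' <;>
    simp [zmul, eta, Jz, dotProduct, Fin.sum_univ_three, cross_apply, Fin.forall_fin_succ]

lemma JetaJ₂ : zmul (Jz : Zorn k) (zmul (eta !![0,0;1,0]) Jz) = eta !![0,0;-1,0] := by
  apply Zorn.ext' <;>
    simp [zmul, eta, Jz, dotProduct, Fin.sum_univ_three, cross_apply, Fin.forall_fin_succ]

lemma JetaJ₃ : zmul (Jz : Zorn k) (zmul (eta !![0,1;0,0]) Jz) = eta !![0,-1;0,0] := by
  apply Zorn.ext' <;>
    simp [zmul, eta, Jz, dotProduct, Fin.sum_univ_three, cross_apply, Fin.forall_fin_succ]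

lemma JetaJ₄ : zmul (Jz : Zorn k) (zmul (eta !![0,0;0,1]) Jz) = eta !![1,0;0,0] := by
  apply Zorn.ext' <;>
    simp [zmul, eta, Jz, dotProduct, Fin.sum_univ_three, cross_apply, Fin.forall_fin_succ]

/-- From the quadratic relations, `z` lies in the `J`-part and has the shape
`η(g)·J` with `det g = 1`. -/
lemma z_shape (z : Zorn k)
    (h1 : zmul z (zmul (eta !![1,0;0,0]) z) = eta !![0,0;0,1])
    (h2' : zmul z (zmul (eta !![0,0;1,0]) z) = eta !![0,0;-1,0])
    (h3 : zmul z (zmul (eta !![0,1;0,0]) z) = eta !![0,-1;0,0])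
    (h4 : zmul z (zmul (eta !![0,0;0,1]) z) = eta !![1,0;0,0]) :
    zmul (eta !![z.2.1 1, z.2.2.1 2; -(z.2.1 2), z.2.2.1 1]) Jz = z ∧
      (!![z.2.1 1, z.2.2.1 2; -(z.2.1 2), z.2.2.1 1] : Matrix (Fin 2) (Fin 2) k).det = 1 := by
  have e1 := congrArg Prod.fst h1
  have e2 := congrFun (congrArg (fun v => v.2.1) h2') 0
  have e3 := congrFun (congrArg (fun v => v.2.2.1) h3) 0
  have e4 := congrArg (fun v => v.2.2.2) h4
  have e5 := congrArg (fun v => v.2.2.2) h1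
  clear h1 h2' h3 h4
  simp [zmul, eta, dotProduct, Fin.sum_univ_three, cross_apply, Matrix.vecHead,
    Matrix.vecTail, Function.comp] at e1 e2 e3 e4 e5
  constructor
  · apply Zorn.ext'
    · simp [zmul, eta, Jz, dotProduct, Fin.sum_univ_three]
      linear_combination -e1
    · intro i; fin_cases i <;>
        simp [zmul, eta, Jz, dotProduct, Fin.sum_univ_three, cross_apply] <;>
        linear_combination -e2
    · intro i; fin_cases i <;>
        simp [zmul, eta, Jz, dotProduct, Fin.sum_univ_three, cross_apply] <;>
        linear_combination -e3
    · simp [zmul, eta, Jz, dotProduct, Fin.sum_univ_three]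
      linear_combination -e4
  · rw [Matrix.det_fin_two]
    simp only [Matrix.cons_val', Matrix.cons_val_zero, Matrix.cons_val_one,
      Matrix.head_cons, Matrix.head_fin_const, Matrix.empty_val', Matrix.cons_val_fin_one,
      Matrix.of_apply]
    linear_combination e5 - z.2.2.1 0 * e2

/-- Injectivity of `b ↦ η(b)·J`. -/
lemma eta_J_inj {g g' : Matrix (Fin 2) (Fin 2) k}
    (hE : zmul (eta g') Jz = zmul (eta g) Jz) : g' = g := by
  have c1 := congrFun (congrArg (fun v => v.2.1) hE) 1
  have c2 := congrFun (congrArg (fun v => v.2.1) hE) 2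
  have c3 := congrFun (congrArg (fun v => v.2.2.1) hE) 1
  have c4 := congrFun (congrArg (fun v => v.2.2.1) hE) 2
  simp [zmul, eta, Jz, dotProduct, Fin.sum_univ_three, cross_apply] at c1 c2 c3 c4
  ext i j
  fin_cases i <;> fin_cases j
  · exact c1
  · exact c4
  · exact c2
  · exact c3

/-- Over a field of characteristic not 2, every `k`-linear bijective
multiplicative map of the Zorn vector matrices fixing `η(Mat₂(k))` pointwise
is of the form `η(a) + η(b)·J ↦ η(a) + η(g·b)·J` for a unique `g` of
determinant 1. -/
theorem exists_unique_gamma (h2 : (2 : k) ≠ 0) (f : Zorn k →ₗ[k] Zorn k)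
    (hbij : Function.Bijective f)
    (hmul : ∀ x y : Zorn k, f (zmul x y) = zmul (f x) (f y))
    (hfix : ∀ a : Matrix (Fin 2) (Fin 2) k, f (eta a) = eta a) :
    ∃! g : Matrix (Fin 2) (Fin 2) k, g.det = 1 ∧
      ∀ a b : Matrix (Fin 2) (Fin 2) k,
        f (eta a + zmul (eta b) Jz) = eta a + zmul (eta (g * b)) Jz := by
  classical
  obtain ⟨z, hzdef⟩ : ∃ z : Zorn k, f Jz = z := ⟨_, rfl⟩
  have hz : ∀ a c : Matrix (Fin 2) (Fin 2) k,
      zmul Jz (zmul (eta a) Jz) = eta c → zmul z (zmul (eta a) z) = eta c := by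
    intro a c hac
    have := hmul Jz (zmul (eta a) Jz)
    rw [hac, hfix, hmul, hfix, hzdef] at this
    exact this.symm
  obtain ⟨hzg, hdet⟩ := z_shape z (hz _ _ JetaJ₁) (hz _ _ JetaJ₂) (hz _ _ JetaJ₃) (hz _ _ JetaJ₄)
  obtain ⟨g, hg⟩ : ∃ g : Matrix (Fin 2) (Fin 2) k,
      g = !![z.2.1 1, z.2.2.1 2; -(z.2.1 2), z.2.2.1 1] := ⟨_, rfl⟩
  rw [← hg] at hzg hdet
  have hfb : ∀ b : Matrix (Fin 2) (Fin 2) k,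
      f (zmul (eta b) Jz) = zmul (eta (g * b)) Jz := by
    intro b
    rw [hmul, hfix, hzdef, ← hzg, eta_zmul_eta_J]
  refine ⟨g, ⟨hdet, ?_⟩, ?_⟩
  · intro a b
    rw [map_add, hfix, hfb]
  · intro g' ⟨_, hprop⟩
    have key := hprop 0 1
    rw [map_add, hfix, hfb, mul_one, mul_one] at key
    exact eta_J_inj (add_right_injective _ key).symm
end

section
/- Let k be a field. Every injective k-linear map f of the Zorn vector matrices over k to themselves satisfying f(1) = 1 and f(x * y) = f(x) * f(y) for all x, y automatically preserves the norm: N(f(x)) = N(x) for all Zorn vector matrices x. -/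
open Matrix

variable {k : Type*} [Field k]

lemma zsq (x : Zorn k) : zmul x x = (x.1 + x.2.2.2) • x - zN x • zone := by
  obtain ⟨a, v, w, d⟩ := x
  simp only [zmul, zN, zone, Prod.ext_iff, Prod.smul_mk, Prod.mk_sub_mk, smul_eq_mul,
    cross_self, dotProduct_comm w v]
  refine ⟨by ring, ?_, ?_, by ring⟩
  · funext i; simp [Pi.smul_apply, smul_eq_mul]; ring
  · funext i; simp [Pi.smul_apply, smul_eq_mul]; ring

lemma zN_smul_one (c : k) : zN (c • (zone : Zorn k)) = c * c := by
  simp [zN, zone]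

/-- Every injective `k`-linear unital multiplicative self-map of the Zorn
vector matrices automatically preserves the norm. -/
theorem norm_preserved (f : Zorn k →ₗ[k] Zorn k)
    (hinj : Function.Injective f)
    (hone : f zone = zone)
    (hmul : ∀ x y : Zorn k, f (zmul x y) = zmul (f x) (f y)) :
    ∀ x : Zorn k, zN (f x) = zN x := by
  intro x
  have key : ((f x).1 + (f x).2.2.2 - (x.1 + x.2.2.2)) • f x
      = (zN (f x) - zN x) • zone := by
    have h1 := hmul x x
    rw [zsq x, zsq (f x)] at h1
    have h2 : f ((x.1 + x.2.2.2) • x - zN x • zone)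
        = (x.1 + x.2.2.2) • f x - zN x • zone := by
      rw [map_sub, f.map_smul, f.map_smul, hone]
    rw [h2] at h1
    rw [sub_smul, sub_smul]
    linear_combination (norm := module) -h1
  by_cases hT : (f x).1 + (f x).2.2.2 - (x.1 + x.2.2.2) = 0
  · rw [hT, zero_smul] at key
    have : zN (f x) - zN x = 0 := by
      have := congrArg Prod.fst key.symm
      simpa [zone] using this
    exact sub_eq_zero.mp this
  · set c := (zN (f x) - zN x) / ((f x).1 + (f x).2.2.2 - (x.1 + x.2.2.2)) with hc
    have hfx : f x = c • zone := by
      have := congrArg (fun z => (((f x).1 + (f x).2.2.2 - (x.1 + x.2.2.2))⁻¹) • z) key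
      simpa [smul_smul, inv_mul_cancel₀ hT, hc, div_eq_inv_mul, mul_comm] using this
    have hx : x = c • zone := by
      apply hinj
      rw [f.map_smul, hone, hfx]
    rw [hfx, hx]
end

section
/- Let k be a field. The k-linear map D on Zorn vector matrices given by D(a, (v₁,v₂,v₃), (w₁,w₂,w₃), d) = (0, (0, −v₃, 0), (0, 0, w₂), 0) is a derivation for the Zorn product, i.e. D(x * y) = D(x) * y + x * D(y) for all x, y, and satisfies D ∘ D = 0. -/
open Matrix

variable {k : Type*} [Field k]

/-- The long-root vector `E_γ`:
`D(a, (v₁,v₂,v₃), (w₁,w₂,w₃), d) = (0, (0, −v₃, 0), (0, 0, w₂), 0)`. -/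
def Dlong (x : Zorn k) : Zorn k :=
  (0, ![0, -x.2.1 2, 0], ![0, 0, x.2.2.1 1], 0)

/-- `Dlong` is a derivation for the Zorn product and squares to zero. -/
theorem Dlong_derivation :
    (∀ x y : Zorn k, Dlong (zmul x y) = zmul (Dlong x) y + zmul x (Dlong y)) ∧
    (Dlong ∘ Dlong = (0 : Zorn k → Zorn k)) := by
  constructor
  · intro x y
    ext i <;>
      simp [Dlong, zmul, crossProduct, dotProduct, Fin.sum_univ_three,
        Prod.ext_iff, funext_iff, Fin.forall_fin_succ] <;>
      fin_cases i <;> simp [vecHead, vecTail] <;> ring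
  · funext x
    simp [Dlong, Prod.ext_iff, funext_iff, Fin.forall_fin_succ]
end
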